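/- Let μ₁, μ₂ ∈ ℝ and σ₁, σ₂ ≥ 0, and set v₁ = σ₁², v₂ = σ₂². Define T : ℝ → ℝ × ℝ by T(z) = (μ₁ + σ₁·z, μ₂ + σ₂·z), and let γ be the pushforward of the standard Gaussian measure N(0, 1) under T. Then γ is a coupling of N(μ₁, v₁) and N(μ₂, v₂) (its first marginal is N(μ₁, v₁) and its second marginal is N(μ₂, v₂)), and ∫ (x − y)² dγ(x, y) = (μ₁ − μ₂)² + (σ₁ − σ₂)². Consequently the squared 2-Wasserstein distance between the two Gaussians equals (μ₁ − μ₂)² + (σ₁ − σ₂)². -/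

import Mathlib

open MeasureTheory ProbabilityTheory Real Filter Set
open scoped NNReal ENNReal

namespace GW


lemma pdf_eq (x : ℝ) : gaussianPDFReal 0 1 x
    = (Real.sqrt (2 * π))⁻¹ * Real.exp (-(1/2) * x ^ 2) := by
  simp only [gaussianPDFReal, NNReal.coe_one, mul_one, sub_zero]
  ring_nf

lemma integral_stdGaussian (g : ℝ → ℝ) :
    ∫ x, g x ∂(gaussianReal 0 1) = ∫ x, gaussianPDFReal 0 1 x * g x := by
  rw [gaussianReal_of_var_ne_zero _ one_ne_zero]
  have h : (gaussianPDF 0 1)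
      = fun x => ((Real.toNNReal (gaussianPDFReal 0 1 x) : ℝ≥0) : ℝ≥0∞) := rfl
  rw [h, integral_withDensity_eq_integral_smul
    ((measurable_gaussianPDFReal 0 1).real_toNNReal)]
  congr 1; ext x
  rw [NNReal.smul_def, smul_eq_mul, Real.coe_toNNReal _ (gaussianPDFReal_nonneg _ _ _)]

lemma integrable_stdGaussian_iff (g : ℝ → ℝ) :
    Integrable g (gaussianReal 0 1)
      ↔ Integrable (fun x => gaussianPDFReal 0 1 x * g x) volume := by
  rw [gaussianReal_of_var_ne_zero _ one_ne_zero]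
  have h : (gaussianPDF 0 1)
      = fun x => ((Real.toNNReal (gaussianPDFReal 0 1 x) : ℝ≥0) : ℝ≥0∞) := rfl
  rw [h, integrable_withDensity_iff_integrable_smul
    ((measurable_gaussianPDFReal 0 1).real_toNNReal)]
  constructor <;> intro hh <;> refine hh.congr (ae_of_all _ fun x => ?_) <;>
    simp only [NNReal.smul_def, smul_eq_mul,
      Real.coe_toNNReal _ (gaussianPDFReal_nonneg _ _ _)]




lemma int_exp : Integrable (fun x : ℝ => Real.exp (-(1/2:ℝ) * x ^ 2)) :=
  integrable_exp_neg_mul_sq (by norm_num)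

lemma int_mul_exp : Integrable (fun x : ℝ => x * Real.exp (-(1/2:ℝ) * x ^ 2)) :=
  integrable_mul_exp_neg_mul_sq (by norm_num)

lemma int_sq_mul_exp : Integrable (fun x : ℝ => x ^ 2 * Real.exp (-(1/2:ℝ) * x ^ 2)) := by
  have h := integrable_rpow_mul_exp_neg_mul_sq (b := 1/2) (by norm_num) (s := (2:ℝ))
    (by norm_num)
  refine h.congr (ae_of_all _ fun x => ?_)
  norm_num [Real.rpow_two]

lemma tendsto_exp_part_top : Tendsto (fun x : ℝ => Real.exp (-(1/2:ℝ) * x ^ 2)) atTop (nhds 0) := by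
  apply Real.tendsto_exp_atBot.comp
  have h : Tendsto (fun x : ℝ => (1/2:ℝ) * x ^ 2) atTop atTop :=
    (tendsto_pow_atTop (by norm_num)).const_mul_atTop (by norm_num)
  exact (tendsto_neg_atTop_atBot.comp h).congr (fun x => by simp)

lemma tendsto_exp_part_bot : Tendsto (fun x : ℝ => Real.exp (-(1/2:ℝ) * x ^ 2)) atBot (nhds 0) := by
  have h := tendsto_exp_part_top.comp tendsto_neg_atBot_atTop
  exact h.congr (fun x => by simp [neg_sq])

lemma tendsto_mul_exp_top : Tendsto (fun x : ℝ => x * Real.exp (-(1/2:ℝ) * x ^ 2)) atTop (nhds 0) := by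
  have h := rpow_mul_exp_neg_mul_sq_isLittleO_exp_neg (b := 1/2) (by norm_num) (1 : ℝ)
  have h2 : Tendsto (fun x : ℝ => Real.exp (-(1/2:ℝ) * x)) atTop (nhds 0) := by
    apply Real.tendsto_exp_atBot.comp
    exact tendsto_neg_atTop_atBot.comp ((tendsto_id).const_mul_atTop (by norm_num : (0:ℝ) < 1/2))
      |>.congr (fun x => by simp)
  have := h.tendsto_zero_of_tendsto h2
  exact this.congr (fun x => by rw [Real.rpow_one])

lemma tendsto_mul_exp_bot : Tendsto (fun x : ℝ => x * Real.exp (-(1/2:ℝ) * x ^ 2)) atBot (nhds 0) := by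
  have h := (tendsto_mul_exp_top.comp tendsto_neg_atBot_atTop).neg
  rw [neg_zero] at h
  exact h.congr (fun x => by simp [neg_sq])

lemma hasDeriv_F (x : ℝ) :
    HasDerivAt (fun x : ℝ => -Real.exp (-(1/2:ℝ) * x ^ 2))
      (x * Real.exp (-(1/2:ℝ) * x ^ 2)) x := by
  have h := (((hasDerivAt_pow 2 x).const_mul (-(1/2:ℝ))).exp).neg
  refine h.congr_deriv ?_
  norm_num
  ring

lemma hasDeriv_G (x : ℝ) :
    HasDerivAt (fun x : ℝ => -(x * Real.exp (-(1/2:ℝ) * x ^ 2)))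
      ((x ^ 2 - 1) * Real.exp (-(1/2:ℝ) * x ^ 2)) x := by
  have h := ((hasDerivAt_id x).mul (((hasDerivAt_pow 2 x).const_mul (-(1/2:ℝ))).exp)).neg
  refine h.congr_deriv ?_
  norm_num
  ring

lemma I1 : ∫ x : ℝ, x * Real.exp (-(1/2:ℝ) * x ^ 2) = 0 := by
  have cont : Continuous (fun x : ℝ => -Real.exp (-(1/2:ℝ) * x ^ 2)) := by continuity
  have h1 : ∫ x in Ioi (0:ℝ), x * Real.exp (-(1/2:ℝ) * x ^ 2)
      = 0 - (-Real.exp (-(1/2:ℝ) * (0:ℝ) ^ 2)) := by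
    refine integral_Ioi_of_hasDerivAt_of_tendsto cont.continuousWithinAt
      (fun x _ => hasDeriv_F x) int_mul_exp.integrableOn ?_
    simpa using tendsto_exp_part_top.neg
  have h2 : ∫ x in Iic (0:ℝ), x * Real.exp (-(1/2:ℝ) * x ^ 2)
      = (-Real.exp (-(1/2:ℝ) * (0:ℝ) ^ 2)) - 0 := by
    refine integral_Iic_of_hasDerivAt_of_tendsto cont.continuousWithinAt
      (fun x _ => hasDeriv_F x) int_mul_exp.integrableOn ?_
    simpa using tendsto_exp_part_bot.neg
  rw [← intervalIntegral.integral_Iic_add_Ioi int_mul_exp.integrableOn int_mul_exp.integrableOn, h1, h2]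
  ring

lemma I2 : ∫ x : ℝ, (x ^ 2 - 1) * Real.exp (-(1/2:ℝ) * x ^ 2) = 0 := by
  have cont : Continuous (fun x : ℝ => -(x * Real.exp (-(1/2:ℝ) * x ^ 2))) := by continuity
  have hint : Integrable (fun x : ℝ => (x ^ 2 - 1) * Real.exp (-(1/2:ℝ) * x ^ 2)) := by
    have := int_sq_mul_exp.sub int_exp
    exact this.congr (ae_of_all _ fun x => by simp only [Pi.sub_apply]; ring)
  have h1 : ∫ x in Ioi (0:ℝ), (x ^ 2 - 1) * Real.exp (-(1/2:ℝ) * x ^ 2)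
      = 0 - (-(0 * Real.exp (-(1/2:ℝ) * (0:ℝ) ^ 2))) := by
    refine integral_Ioi_of_hasDerivAt_of_tendsto cont.continuousWithinAt
      (fun x _ => hasDeriv_G x) hint.integrableOn ?_
    simpa using tendsto_mul_exp_top.neg
  have h2 : ∫ x in Iic (0:ℝ), (x ^ 2 - 1) * Real.exp (-(1/2:ℝ) * x ^ 2)
      = (-(0 * Real.exp (-(1/2:ℝ) * (0:ℝ) ^ 2))) - 0 := by
    refine integral_Iic_of_hasDerivAt_of_tendsto cont.continuousWithinAt
      (fun x _ => hasDeriv_G x) hint.integrableOn ?_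
    simpa using tendsto_mul_exp_bot.neg
  rw [← intervalIntegral.integral_Iic_add_Ioi hint.integrableOn hint.integrableOn, h1, h2]
  ring

lemma Iexp : ∫ x : ℝ, Real.exp (-(1/2:ℝ) * x ^ 2) = Real.sqrt (2 * π) := by
  rw [integral_gaussian]
  rw [show π / (1/2:ℝ) = 2 * π by ring]

lemma I2' : ∫ x : ℝ, x ^ 2 * Real.exp (-(1/2:ℝ) * x ^ 2) = Real.sqrt (2 * π) := by
  have h := integral_sub int_sq_mul_exp int_exp
  have h2 : (∫ x : ℝ, (x ^ 2 * Real.exp (-(1/2:ℝ) * x ^ 2) - Real.exp (-(1/2:ℝ) * x ^ 2)))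
      = 0 := by
    rw [← I2]; congr 1; ext x; ring
  rw [h2] at h
  have := sub_eq_zero.mp h.symm
  rw [this, Iexp]



lemma integrable_std (g : ℝ → ℝ) (hg : Integrable (fun x => g x * Real.exp (-(1/2:ℝ) * x ^ 2))) :
    Integrable g (gaussianReal 0 1) := by
  rw [integrable_stdGaussian_iff]
  refine (hg.const_mul ((Real.sqrt (2 * π))⁻¹)).congr (ae_of_all _ fun x => ?_)
  simp only [pdf_eq]; ring

lemma integral_std_eq (g : ℝ → ℝ) :
    ∫ x, g x ∂(gaussianReal 0 1)
      = (Real.sqrt (2 * π))⁻¹ * ∫ x, g x * Real.exp (-(1/2:ℝ) * x ^ 2) := by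
  rw [integral_stdGaussian, ← integral_const_mul]
  congr 1; ext x; rw [pdf_eq]; ring

lemma sqrt_two_pi_pos : 0 < Real.sqrt (2 * π) :=
  Real.sqrt_pos.mpr (by positivity)

lemma integral_id_std : ∫ x, x ∂(gaussianReal 0 1) = 0 := by
  rw [integral_std_eq, I1, mul_zero]

lemma integral_sq_std : ∫ x, x ^ 2 ∂(gaussianReal 0 1) = 1 := by
  rw [integral_std_eq, I2', inv_mul_cancel₀ sqrt_two_pi_pos.ne']

lemma integrable_id_std : Integrable (fun x : ℝ => x) (gaussianReal 0 1) :=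
  integrable_std _ int_mul_exp

lemma integrable_sq_std : Integrable (fun x : ℝ => x ^ 2) (gaussianReal 0 1) :=
  integrable_std _ int_sq_mul_exp

lemma memℒp_id_std : MemLp (fun x : ℝ => x) 2 (gaussianReal 0 1) :=
  (memLp_two_iff_integrable_sq measurable_id.aestronglyMeasurable).mpr integrable_sq_std

/-- integral of (a+b z)^2 under N(0,1) -/
lemma integral_affine_sq (a b : ℝ) :
    ∫ z, (a + b * z) ^ 2 ∂(gaussianReal 0 1) = a ^ 2 + b ^ 2 := by
  have h1 : Integrable (fun z : ℝ => (2 * a * b) * z) (gaussianReal 0 1) :=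
    integrable_id_std.const_mul _
  have h2 : Integrable (fun z : ℝ => b ^ 2 * z ^ 2) (gaussianReal 0 1) :=
    integrable_sq_std.const_mul _
  have hc : Integrable (fun _ : ℝ => a ^ 2) (gaussianReal 0 1) := integrable_const _
  have h12 : Integrable (fun z : ℝ => (2 * a * b) * z + b ^ 2 * z ^ 2) (gaussianReal 0 1) :=
    h1.add h2
  have : (fun z : ℝ => (a + b * z) ^ 2)
      = fun z => a ^ 2 + ((2 * a * b) * z + b ^ 2 * z ^ 2) := by ext z; ring
  rw [this, integral_add hc h12, integral_add h1 h2, integral_const_mul,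
    integral_const_mul, integral_id_std, integral_sq_std, integral_const]
  simp

lemma integrable_affine_sq (a b : ℝ) :
    Integrable (fun z : ℝ => (a + b * z) ^ 2) (gaussianReal 0 1) := by
  have : (fun z : ℝ => (a + b * z) ^ 2)
      = fun z => a ^ 2 + ((2 * a * b) * z + b ^ 2 * z ^ 2) := by ext z; ring
  rw [this]
  exact (integrable_const _).add ((integrable_id_std.const_mul _).add
    (integrable_sq_std.const_mul _))

lemma memℒp_affine (a b : ℝ) : MemLp (fun z : ℝ => a + b * z) 2 (gaussianReal 0 1) :=
  (memLp_two_iff_integrable_sq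
    ((measurable_const.add (measurable_id.const_mul b)).aestronglyMeasurable)).mpr
    (integrable_affine_sq a b)

lemma map_affine (m s : ℝ) (v : ℝ≥0) (hv : (v : ℝ) = s ^ 2) :
    (gaussianReal 0 1).map (fun z => m + s * z) = gaussianReal m v := by
  have h1 : (fun z : ℝ => m + s * z) = (· + m) ∘ (s * ·) := by
    ext z; simp [add_comm]
  rw [h1, ← Measure.map_map (measurable_id'.add_const m) (measurable_const_mul s),
    gaussianReal_map_const_mul, gaussianReal_map_add_const]
  have hv' : (⟨s ^ 2, sq_nonneg s⟩ : ℝ≥0) * 1 = v := by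
    rw [mul_one]
    exact NNReal.coe_injective (by rw [hv] : ((⟨s ^ 2, sq_nonneg s⟩ : ℝ≥0) : ℝ) = v)
  rw [mul_zero, zero_add]; exact congrArg _ hv'

lemma memℒp_id_gauss (m s : ℝ) (v : ℝ≥0) (hv : (v : ℝ) = s ^ 2) :
    MemLp (fun x : ℝ => x) 2 (gaussianReal m v) := by
  rw [← map_affine m s v hv,
    memLp_map_measure_iff (g := fun x : ℝ => x) measurable_id.aestronglyMeasurable (by fun_prop)]
  simpa [Function.comp_def] using memℒp_affine m s

lemma integral_id_gauss (m s : ℝ) (v : ℝ≥0) (hv : (v : ℝ) = s ^ 2) :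
    ∫ x, x ∂(gaussianReal m v) = m := by
  rw [← map_affine m s v hv,
    integral_map (f := fun x : ℝ => x) (by fun_prop) measurable_id.aestronglyMeasurable]
  have h1 : Integrable (fun z : ℝ => s * z) (gaussianReal 0 1) := integrable_id_std.const_mul s
  rw [integral_add (integrable_const m) h1, integral_const_mul, integral_id_std, integral_const]
  simp

lemma integral_centered_sq_gauss (m s : ℝ) (v : ℝ≥0) (hv : (v : ℝ) = s ^ 2) :
    ∫ x, (x - m) ^ 2 ∂(gaussianReal m v) = s ^ 2 := by
  rw [← map_affine m s v hv, integral_map (f := fun x : ℝ => (x - m) ^ 2) (by fun_prop)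
    ((measurable_id.sub_const m).pow_const 2).aestronglyMeasurable]
  have h : (fun z : ℝ => (m + s * z - m) ^ 2) = fun z : ℝ => ((0:ℝ) + s * z) ^ 2 := by
    ext z; ring
  rw [h, integral_affine_sq 0 s]
  ring

lemma lower_bound (μ₁ μ₂ σ₁ σ₂ : ℝ) (hσ₁ : 0 ≤ σ₁) (hσ₂ : 0 ≤ σ₂)
    (v₁ v₂ : ℝ≥0) (hv₁ : (v₁ : ℝ) = σ₁ ^ 2) (hv₂ : (v₂ : ℝ) = σ₂ ^ 2)
    (γ' : Measure (ℝ × ℝ)) (hp : IsProbabilityMeasure γ')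
    (h1 : γ'.map Prod.fst = gaussianReal μ₁ v₁)
    (h2 : γ'.map Prod.snd = gaussianReal μ₂ v₂)
    (hint : Integrable (fun z : ℝ × ℝ => (z.1 - z.2) ^ 2) γ') :
    (μ₁ - μ₂) ^ 2 + (σ₁ - σ₂) ^ 2 ≤ ∫ z : ℝ × ℝ, (z.1 - z.2) ^ 2 ∂γ' := by
  have hfst : MemLp (fun z : ℝ × ℝ => z.1) 2 γ' := by
    have h := memℒp_id_gauss μ₁ σ₁ v₁ hv₁
    rw [← h1] at h
    exact (memLp_map_measure_iff measurable_id.aestronglyMeasurable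
      measurable_fst.aemeasurable).mp h
  have hsnd : MemLp (fun z : ℝ × ℝ => z.2) 2 γ' := by
    have h := memℒp_id_gauss μ₂ σ₂ v₂ hv₂
    rw [← h2] at h
    exact (memLp_map_measure_iff measurable_id.aestronglyMeasurable
      measurable_snd.aemeasurable).mp h
  obtain ⟨F, hFdef⟩ : ∃ F : ℝ × ℝ → ℝ, F = fun z => z.1 - μ₁ := ⟨_, rfl⟩
  obtain ⟨G, hGdef⟩ : ∃ G : ℝ × ℝ → ℝ, G = fun z => z.2 - μ₂ := ⟨_, rfl⟩
  have hF : MemLp F 2 γ' := hFdef ▸ hfst.sub (memLp_const μ₁)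
  have hG : MemLp G 2 γ' := hGdef ▸ hsnd.sub (memLp_const μ₂)
  have hF1 : Integrable F γ' := hF.integrable one_le_two
  have hG1 : Integrable G γ' := hG.integrable one_le_two
  have hF2 : Integrable (fun z => F z ^ 2) γ' := hF.integrable_sq
  have hG2 : Integrable (fun z => G z ^ 2) γ' := hG.integrable_sq
  have hFG : Integrable (fun z => F z * G z) γ' := by
    have hM : Integrable (fun z => (F z ^ 2 + G z ^ 2) / 2) γ' := (hF2.add hG2).div_const 2
    refine Integrable.mono' hM (hF.1.mul hG.1) (ae_of_all _ fun z => ?_)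
    rw [Real.norm_eq_abs, abs_mul]
    show |F z| * |G z| ≤ (F z ^ 2 + G z ^ 2) / 2
    have h2 := two_mul_le_add_sq |F z| |G z|
    rw [sq_abs, sq_abs] at h2
    nlinarith [h2]
  have hIfst : ∫ z : ℝ × ℝ, z.1 ∂γ' = μ₁ := by
    have h := integral_map (μ := γ') measurable_fst.aemeasurable
      (f := fun x : ℝ => x) measurable_id.aestronglyMeasurable
    rw [h1] at h
    rw [← h, integral_id_gauss μ₁ σ₁ v₁ hv₁]
  have hIsnd : ∫ z : ℝ × ℝ, z.2 ∂γ' = μ₂ := by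
    have h := integral_map (μ := γ') measurable_snd.aemeasurable
      (f := fun x : ℝ => x) measurable_id.aestronglyMeasurable
    rw [h2] at h
    rw [← h, integral_id_gauss μ₂ σ₂ v₂ hv₂]
  have hiF : ∫ z, F z ∂γ' = 0 := by
    rw [hFdef]
    rw [integral_sub (hfst.integrable one_le_two) (integrable_const μ₁), hIfst, integral_const]
    simp
  have hiG : ∫ z, G z ∂γ' = 0 := by
    rw [hGdef]
    rw [integral_sub (hsnd.integrable one_le_two) (integrable_const μ₂), hIsnd, integral_const]
    simp
  have hiF2 : ∫ z, F z ^ 2 ∂γ' = σ₁ ^ 2 := by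
    have h := integral_map (μ := γ') measurable_fst.aemeasurable
      (f := fun x : ℝ => (x - μ₁) ^ 2) ((measurable_id.sub_const μ₁).pow_const 2).aestronglyMeasurable
    rw [h1] at h
    rw [hFdef, ← integral_centered_sq_gauss μ₁ σ₁ v₁ hv₁, h]
  have hiG2 : ∫ z, G z ^ 2 ∂γ' = σ₂ ^ 2 := by
    have h := integral_map (μ := γ') measurable_snd.aemeasurable
      (f := fun x : ℝ => (x - μ₂) ^ 2) ((measurable_id.sub_const μ₂).pow_const 2).aestronglyMeasurable
    rw [h2] at h
    rw [hGdef, ← integral_centered_sq_gauss μ₂ σ₂ v₂ hv₂, h]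
  -- Cauchy-Schwarz
  have hCS : ∫ z, F z * G z ∂γ' ≤ σ₁ * σ₂ := by
    have habsint : Integrable (fun z => |F z| * |G z|) γ' :=
      hFG.abs.congr (ae_of_all _ fun z => (abs_mul _ _))
    have h1' : ∫ z, F z * G z ∂γ' ≤ ∫ z, |F z| * |G z| ∂γ' := by
      refine integral_mono hFG habsint fun z => ?_
      exact le_trans (le_abs_self _) (le_of_eq (abs_mul _ _))
    have hconj : Real.HolderConjugate 2 2 := Real.HolderConjugate.two_two
    have h2ofReal : (2 : ℝ≥0∞) = ENNReal.ofReal (2:ℝ) := by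
      simp [ENNReal.ofReal_ofNat]
    have hFa : MemLp (fun z => |F z|) (ENNReal.ofReal (2:ℝ)) γ' := by
      rw [← h2ofReal]
      exact hF.norm
    have hGa : MemLp (fun z => |G z|) (ENNReal.ofReal (2:ℝ)) γ' := by
      rw [← h2ofReal]
      exact hG.norm
    have hH := integral_mul_le_Lp_mul_Lq_of_nonneg hconj
      (ae_of_all _ fun z => abs_nonneg (F z)) (ae_of_all _ fun z => abs_nonneg (G z)) hFa hGa
    have hrw : ∀ f : ℝ × ℝ → ℝ, (fun z => |f z| ^ (2:ℝ)) = fun z => f z ^ 2 := by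
      intro f; ext z; rw [Real.rpow_two, sq_abs]
    rw [hrw F, hrw G] at hH
    rw [hiF2, hiG2] at hH
    have hpow : ∀ t : ℝ, 0 ≤ t → (t ^ 2) ^ ((1:ℝ)/2) = t := fun t ht => by
      rw [← Real.sqrt_eq_rpow, Real.sqrt_sq ht]
    rw [hpow σ₁ hσ₁, hpow σ₂ hσ₂] at hH
    exact le_trans h1' hH
  -- expansion of the cost
  have eFG2 : Integrable (fun z => F z ^ 2 + G z ^ 2) γ' := hF2.add hG2
  have eCF : Integrable (fun z => (μ₁ - μ₂) ^ 2 + (2 * (μ₁ - μ₂)) * F z) γ' :=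
    (integrable_const _).add (hF1.const_mul _)
  have e1 : Integrable
      (fun z => F z ^ 2 + G z ^ 2 + ((μ₁ - μ₂) ^ 2 + (2 * (μ₁ - μ₂)) * F z)) γ' :=
    eFG2.add eCF
  have eG' : Integrable (fun z => (2 * (μ₁ - μ₂)) * G z) γ' := hG1.const_mul _
  have eFG' : Integrable (fun z => 2 * (F z * G z)) γ' := hFG.const_mul 2
  have e2 : Integrable (fun z => (2 * (μ₁ - μ₂)) * G z + 2 * (F z * G z)) γ' :=
    eG'.add eFG'
  have key : (fun z : ℝ × ℝ => (z.1 - z.2) ^ 2)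
      = fun z => (F z ^ 2 + G z ^ 2 + ((μ₁ - μ₂) ^ 2 + (2 * (μ₁ - μ₂)) * F z))
          - ((2 * (μ₁ - μ₂)) * G z + 2 * (F z * G z)) := by
    ext z; simp only [hFdef, hGdef]; ring
  have hexp : ∫ z : ℝ × ℝ, (z.1 - z.2) ^ 2 ∂γ'
      = σ₁ ^ 2 + σ₂ ^ 2 + (μ₁ - μ₂) ^ 2 - 2 * ∫ z, F z * G z ∂γ' := by
    rw [key, integral_sub e1 e2,
      integral_add eFG2 eCF,
      integral_add hF2 hG2,
      integral_add (integrable_const _) (hF1.const_mul _),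
      integral_add eG' eFG',
      integral_const_mul, integral_const_mul, integral_const_mul,
      hiF, hiF2, hiG, hiG2, integral_const]
    simp only [probReal_univ, smul_eq_mul, one_mul, mul_zero, add_zero]
    ring
  rw [hexp]
  nlinarith [hCS]

end GW

/-- Let `T z = (μ₁ + σ₁ z, μ₂ + σ₂ z)` with `σ₁, σ₂ ≥ 0`, and let `γ` be the pushforward of
the standard Gaussian `N(0,1)` under `T`. Then `γ` is a coupling of `N(μ₁, σ₁²)` and
`N(μ₂, σ₂²)`, its quadratic transport cost equals `(μ₁ − μ₂)² + (σ₁ − σ₂)²`, and consequently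
the squared 2-Wasserstein distance between the two Gaussians (the infimum of the quadratic
transport costs over all couplings with integrable quadratic cost) equals
`(μ₁ − μ₂)² + (σ₁ − σ₂)²`. -/
theorem gaussian_wasserstein_sq_eq
    (μ₁ μ₂ : ℝ) (σ₁ σ₂ : ℝ) (hσ₁ : 0 ≤ σ₁) (hσ₂ : 0 ≤ σ₂)
    (v₁ v₂ : ℝ≥0) (hv₁ : (v₁ : ℝ) = σ₁ ^ 2) (hv₂ : (v₂ : ℝ) = σ₂ ^ 2)
    (T : ℝ → ℝ × ℝ) (hT : T = fun z => (μ₁ + σ₁ * z, μ₂ + σ₂ * z))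
    (γ : Measure (ℝ × ℝ)) (hγ : γ = (gaussianReal 0 1).map T) :
    γ.map Prod.fst = gaussianReal μ₁ v₁ ∧
    γ.map Prod.snd = gaussianReal μ₂ v₂ ∧
    (∫ z : ℝ × ℝ, (z.1 - z.2) ^ 2 ∂γ) = (μ₁ - μ₂) ^ 2 + (σ₁ - σ₂) ^ 2 ∧
    sInf {c : ℝ | ∃ γ' : Measure (ℝ × ℝ), IsProbabilityMeasure γ' ∧
        γ'.map Prod.fst = gaussianReal μ₁ v₁ ∧
        γ'.map Prod.snd = gaussianReal μ₂ v₂ ∧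
        Integrable (fun z : ℝ × ℝ => (z.1 - z.2) ^ 2) γ' ∧
        c = ∫ z : ℝ × ℝ, (z.1 - z.2) ^ 2 ∂γ'} =
      (μ₁ - μ₂) ^ 2 + (σ₁ - σ₂) ^ 2 := by
  have hTm : Measurable T := by rw [hT]; fun_prop
  have hmap1 : γ.map Prod.fst = gaussianReal μ₁ v₁ := by
    rw [hγ, Measure.map_map measurable_fst hTm]
    have h : (Prod.fst ∘ T) = fun z : ℝ => μ₁ + σ₁ * z := by rw [hT]; rfl
    rw [h, GW.map_affine μ₁ σ₁ v₁ hv₁]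
  have hmap2 : γ.map Prod.snd = gaussianReal μ₂ v₂ := by
    rw [hγ, Measure.map_map measurable_snd hTm]
    have h : (Prod.snd ∘ T) = fun z : ℝ => μ₂ + σ₂ * z := by rw [hT]; rfl
    rw [h, GW.map_affine μ₂ σ₂ v₂ hv₂]
  have hcostm : Measurable (fun z : ℝ × ℝ => (z.1 - z.2) ^ 2) := by fun_prop
  have hcomp : ((fun z : ℝ × ℝ => (z.1 - z.2) ^ 2) ∘ T)
      = fun z : ℝ => ((μ₁ - μ₂) + (σ₁ - σ₂) * z) ^ 2 := by
    rw [hT]; ext z; simp only [Function.comp_apply]; ring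
  have hcost_int : Integrable (fun z : ℝ × ℝ => (z.1 - z.2) ^ 2) γ := by
    rw [hγ, integrable_map_measure hcostm.aestronglyMeasurable hTm.aemeasurable, hcomp]
    exact GW.integrable_affine_sq _ _
  have hcost : (∫ z : ℝ × ℝ, (z.1 - z.2) ^ 2 ∂γ) = (μ₁ - μ₂) ^ 2 + (σ₁ - σ₂) ^ 2 := by
    rw [hγ, integral_map hTm.aemeasurable hcostm.aestronglyMeasurable]
    calc ∫ z, ((T z).1 - (T z).2) ^ 2 ∂(gaussianReal 0 1)
        = ∫ z, ((μ₁ - μ₂) + (σ₁ - σ₂) * z) ^ 2 ∂(gaussianReal 0 1) := by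
          rw [← hcomp]; rfl
      _ = (μ₁ - μ₂) ^ 2 + (σ₁ - σ₂) ^ 2 := GW.integral_affine_sq _ _
  refine ⟨hmap1, hmap2, hcost, ?_⟩
  have hprob : IsProbabilityMeasure γ := by
    rw [hγ]; exact Measure.isProbabilityMeasure_map hTm.aemeasurable
  refine IsLeast.csInf_eq ⟨⟨γ, hprob, hmap1, hmap2, hcost_int, hcost.symm⟩, ?_⟩
  rintro c ⟨γ', hp', h1', h2', hint', rfl⟩
  exact GW.lower_bound μ₁ μ₂ σ₁ σ₂ hσ₁ hσ₂ v₁ v₂ hv₁ hv₂ γ' hp' h1' h2' hint'
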